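/- Let ρ and σ be positive definite quantum states on a finite-dimensional complex Hilbert space and let m be the minimal eigenvalue of σ. Then D̂(ρ‖σ) ≤ D(ρ‖σ) + (1/m)·‖ρ − σ‖∞. -/

import Mathlib

open Matrix MeasureTheory
open scoped Kronecker Classical ComplexOrder

noncomputable section

namespace QPaper

variable {n : Type*}

/-- A quantum state: positive semidefinite matrix with trace one. -/
def IsState [Fintype n] (ρ : Matrix n n ℂ) : Prop :=
  ρ.PosSemidef ∧ ρ.trace = 1

/-- The trace norm of a matrix: `tr √(XᴴX)`. -/
noncomputable def traceNorm [Fintype n] [DecidableEq n] (X : Matrix n n ℂ) : ℝ :=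
  (((Matrix.posSemidef_conjTranspose_mul_self X).1.eigenvectorUnitary.1 *
      Matrix.diagonal (((↑) : ℝ → ℂ) ∘ (√·) ∘ (Matrix.posSemidef_conjTranspose_mul_self X).1.eigenvalues) *
      (star (Matrix.posSemidef_conjTranspose_mul_self X).1.eigenvectorUnitary : Matrix n n ℂ)).trace).re

/-- Functional calculus for Hermitian matrices: apply `f` to the eigenvalues. -/
noncomputable def matFun [Fintype n] [DecidableEq n] (f : ℝ → ℂ) (A : Matrix n n ℂ) :
    Matrix n n ℂ :=
  if hA : A.IsHermitian then
    (hA.eigenvectorUnitary : Matrix n n ℂ) *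
      Matrix.diagonal (fun i => f (hA.eigenvalues i)) *
        (hA.eigenvectorUnitary : Matrix n n ℂ)ᴴ
  else 0

/-- Matrix logarithm on the support (0 ↦ 0). -/
noncomputable def mlog [Fintype n] [DecidableEq n] (A : Matrix n n ℂ) : Matrix n n ℂ :=
  matFun (fun x => (Real.log x : ℂ)) A

/-- Real matrix powers on the support (Moore-Penrose style, 0 ↦ 0 for r ≠ 0). -/
noncomputable def mpow [Fintype n] [DecidableEq n] (A : Matrix n n ℂ) (r : ℝ) : Matrix n n ℂ :=
  matFun (fun x => ((x ^ r : ℝ) : ℂ)) A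

/-- Complex matrix powers on the support (0 ↦ 0). -/
noncomputable def mcpow [Fintype n] [DecidableEq n] (A : Matrix n n ℂ) (z : ℂ) : Matrix n n ℂ :=
  matFun (fun x => if x = 0 then 0 else (x : ℂ) ^ z) A

/-- The matrix `A log A`, functional calculus for `x ↦ x log x` (0 ↦ 0). -/
noncomputable def mXLogX [Fintype n] [DecidableEq n] (A : Matrix n n ℂ) : Matrix n n ℂ :=
  matFun (fun x => ((x * Real.log x : ℝ) : ℂ)) A

/-- Umegaki relative entropy `D(ρ‖K) = tr[ρ (log ρ - log K)]`. -/
noncomputable def relEnt [Fintype n] [DecidableEq n] (ρ K : Matrix n n ℂ) : ℝ :=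
  ((ρ * (mlog ρ - mlog K)).trace).re

/-- Belavkin–Staszewski entropy `D̂(ρ‖K) = tr[ρ log(ρ^{1/2} K⁻¹ ρ^{1/2})]`. -/
noncomputable def bsEnt [Fintype n] [DecidableEq n] (ρ K : Matrix n n ℂ) : ℝ :=
  ((ρ * mlog (mpow ρ (1/2) * mpow K (-1) * mpow ρ (1/2))).trace).re

/-- von Neumann entropy. -/
noncomputable def vnEnt [Fintype n] [DecidableEq n] (ρ : Matrix n n ℂ) : ℝ :=
  -(((ρ * mlog ρ).trace).re)

/-- Operator norm of a matrix. -/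
noncomputable def opNorm [Fintype n] [DecidableEq n] (X : Matrix n n ℂ) : ℝ :=
  ‖Matrix.toEuclideanCLM (𝕜 := ℂ) X‖

/-- `ker K ⊆ ker ρ`. -/
def kerLE [Fintype n] (K ρ : Matrix n n ℂ) : Prop :=
  ∀ v : n → ℂ, K.mulVec v = 0 → ρ.mulVec v = 0

/-- partial trace over the first factor. -/
noncomputable def ptrA {a b : Type*} [Fintype a] (ρ : Matrix (a × b) (a × b) ℂ) :
    Matrix b b ℂ :=
  Matrix.of fun i j => ∑ x : a, ρ (x, i) (x, j)

/-- partial trace over the second factor. -/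
noncomputable def ptrB {a b : Type*} [Fintype b] (ρ : Matrix (a × b) (a × b) ℂ) :
    Matrix a a ℂ :=
  Matrix.of fun i j => ∑ x : b, ρ (i, x) (j, x)

/-- partial trace over the middle factor of a tripartite system. -/
noncomputable def ptrMid {a b c : Type*} [Fintype b]
    (ρ : Matrix (a × b × c) (a × b × c) ℂ) : Matrix (a × c) (a × c) ℂ :=
  Matrix.of fun p q => ∑ y : b, ρ (p.1, y, p.2) (q.1, y, q.2)

/-- Conditional entropy `H_ρ(A|B) = S(ρ_{AB}) - S(ρ_B)`. -/
noncomputable def condEnt {a b : Type*} [Fintype a] [Fintype b] [DecidableEq a] [DecidableEq b]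
    (ρ : Matrix (a × b) (a × b) ℂ) : ℝ :=
  vnEnt ρ - vnEnt (ptrA ρ)

/-- Mutual information `I_ρ(A:B) = S(ρ_A) + S(ρ_B) - S(ρ_{AB})`. -/
noncomputable def mutInfo {a b : Type*} [Fintype a] [Fintype b] [DecidableEq a] [DecidableEq b]
    (ρ : Matrix (a × b) (a × b) ℂ) : ℝ :=
  vnEnt (ptrB ρ) + vnEnt (ptrA ρ) - vnEnt ρ

/-- Conditional mutual information `I_ρ(A:B|C)`. -/
noncomputable def condMutInfo {a b c : Type*} [Fintype a] [Fintype b] [Fintype c]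
    [DecidableEq a] [DecidableEq b] [DecidableEq c]
    (ρ : Matrix (a × b × c) (a × b × c) ℂ) : ℝ :=
  vnEnt (ptrMid ρ) + vnEnt (ptrA ρ) - vnEnt (ptrA (ptrA ρ)) - vnEnt ρ

/-- BS-conditional entropy `Ĥ_ρ(A|B) = -D̂(ρ ‖ 𝟙_A ⊗ ρ_B)`. -/
noncomputable def bsCondEnt {a b : Type*} [Fintype a] [Fintype b] [DecidableEq a] [DecidableEq b]
    (ρ : Matrix (a × b) (a × b) ℂ) : ℝ :=
  -(bsEnt ρ ((1 : Matrix a a ℂ) ⊗ₖ ptrA ρ))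

/-- BS-mutual information `Î_ρ(A:B) = D̂(ρ ‖ ρ_A ⊗ ρ_B)`. -/
noncomputable def bsMutInfo {a b : Type*} [Fintype a] [Fintype b] [DecidableEq a] [DecidableEq b]
    (ρ : Matrix (a × b) (a × b) ℂ) : ℝ :=
  bsEnt ρ (ptrB ρ ⊗ₖ ptrA ρ)

/-- BS-conditional mutual information `Î_ρ(A:B|C) = Ĥ_ρ(A|C) - Ĥ_ρ(A|BC)`. -/
noncomputable def bsCondMutInfo {a b c : Type*} [Fintype a] [Fintype b] [Fintype c]
    [DecidableEq a] [DecidableEq b] [DecidableEq c]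
    (ρ : Matrix (a × b × c) (a × b × c) ℂ) : ℝ :=
  bsCondEnt (ptrMid ρ) - bsCondEnt (a := a) (b := b × c) ρ

/-- Binary entropy. -/
noncomputable def binEnt (p : ℝ) : ℝ :=
  -(p * Real.log p) - (1 - p) * Real.log (1 - p)

/-- The function `f_{c₁,c₂}`. -/
noncomputable def fcc (c₁ c₂ p : ℝ) : ℝ :=
  p * Real.log (p + (1 - p) * c₁) + (1 - p) * Real.log ((1 - p) + p * c₂)

/-- The probability density `β₀`. -/
noncomputable def beta0 (t : ℝ) : ℝ :=
  (Real.pi / 2) * (Real.cosh (Real.pi * t) + 1)⁻¹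



section AuxLemmas
set_option linter.unusedSectionVars false
set_option synthInstance.maxHeartbeats 1000000
set_option maxHeartbeats 2000000
variable [Fintype n] [DecidableEq n]

lemma matFun_apply {A : Matrix n n ℂ} (hA : A.IsHermitian) (f : ℝ → ℂ) :
    matFun f A = (hA.eigenvectorUnitary : Matrix n n ℂ) *
      Matrix.diagonal (fun i => f (hA.eigenvalues i)) *
        (hA.eigenvectorUnitary : Matrix n n ℂ)ᴴ := by
  rw [matFun, dif_pos hA]

lemma star_mul_self_u {A : Matrix n n ℂ} (hA : A.IsHermitian) :
    (hA.eigenvectorUnitary : Matrix n n ℂ)ᴴ * (hA.eigenvectorUnitary : Matrix n n ℂ) = 1 := by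
  rw [← Matrix.star_eq_conjTranspose]; exact Unitary.coe_star_mul_self _

lemma mul_star_self_u {A : Matrix n n ℂ} (hA : A.IsHermitian) :
    (hA.eigenvectorUnitary : Matrix n n ℂ) * (hA.eigenvectorUnitary : Matrix n n ℂ)ᴴ = 1 := by
  rw [← Matrix.star_eq_conjTranspose]; exact Unitary.coe_mul_star_self _

lemma spectral' {A : Matrix n n ℂ} (hA : A.IsHermitian) :
    A = (hA.eigenvectorUnitary : Matrix n n ℂ) *
      Matrix.diagonal (fun i => (hA.eigenvalues i : ℂ)) *
        (hA.eigenvectorUnitary : Matrix n n ℂ)ᴴ := by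
  rw [← Matrix.star_eq_conjTranspose]
  exact hA.spectral_theorem

lemma conj_mul_conj (U : Matrix n n ℂ) (hU : Uᴴ * U = 1) (D E : Matrix n n ℂ) :
    (U * D * Uᴴ) * (U * E * Uᴴ) = U * (D * E) * Uᴴ := by
  simp only [mul_assoc]
  rw [← mul_assoc Uᴴ U, hU, one_mul]

lemma trace_conj (U : Matrix n n ℂ) (hU : Uᴴ * U = 1) (B : Matrix n n ℂ) :
    (U * B * Uᴴ).trace = B.trace := by
  rw [trace_mul_cycle, hU, one_mul]

lemma conj_sub (U D E : Matrix n n ℂ) : U * D * Uᴴ - U * E * Uᴴ = U * (D - E) * Uᴴ := by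
  rw [mul_sub, sub_mul]

lemma conj_add (U D E : Matrix n n ℂ) : U * D * Uᴴ + U * E * Uᴴ = U * (D + E) * Uᴴ := by
  rw [mul_add, add_mul]

lemma smul_one_conj (U : Matrix n n ℂ) (hU : U * Uᴴ = 1) (z : ℂ) :
    z • (1 : Matrix n n ℂ) = U * diagonal (fun _ => z) * Uᴴ := by
  have h1 : (diagonal (fun _ => z) : Matrix n n ℂ) = z • 1 := by
    ext i j
    by_cases h : i = j <;> simp [diagonal_apply, one_apply, h]
  rw [h1, Matrix.mul_smul, Matrix.smul_mul, mul_one, hU]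

lemma isHermitian_conj_diag (U : Matrix n n ℂ) (g : n → ℝ) :
    (U * diagonal (fun i => (g i : ℂ)) * Uᴴ).IsHermitian := by
  have h1 : (U * diagonal (fun i => (g i : ℂ)) * Uᴴ)ᴴ
      = U * (diagonal (fun i => (g i : ℂ)))ᴴ * Uᴴ := by
    simp [conjTranspose_mul, mul_assoc]
  have h2 : (star fun i => ((g i : ℂ))) = (fun i => ((g i : ℂ))) := by
    funext i
    simp [Pi.star_apply, Complex.star_def, Complex.conj_ofReal]
  unfold Matrix.IsHermitian
  rw [h1, diagonal_conjTranspose, h2]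

lemma psd_conj_diag (U : Matrix n n ℂ) (g : n → ℝ) (hg : ∀ i, 0 ≤ g i) :
    (U * diagonal (fun i => (g i : ℂ)) * Uᴴ).PosSemidef :=
  (posSemidef_diagonal_iff.mpr fun i =>
    Complex.zero_le_real.mpr (hg i)).mul_mul_conjTranspose_same U

lemma trace_re_nonneg {Q : Matrix n n ℂ} (hQ : Q.PosSemidef) : 0 ≤ Q.trace.re := by
  have h : ∀ i, 0 ≤ (Q i i).re := fun i => by
    have := hQ.dotProduct_mulVec_nonneg (Pi.single i 1)
    simp only [mulVec_single, dotProduct, Pi.star_apply, Pi.single_apply, mul_one] at this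
    simp only [Pi.smul_apply, col_apply, op_smul_eq_mul, mul_one] at this
    have h2 : (∑ x : n, star (if x = i then (1:ℂ) else 0) * Q x i) = Q i i := by
      rw [Finset.sum_eq_single i] <;> simp_all
    rw [h2] at this
    exact (Complex.le_def.mp this).1
  rw [trace, Complex.re_sum]
  exact Finset.sum_nonneg fun i _ => h i

lemma trace_mul_psd_nonneg {P Q : Matrix n n ℂ} (hP : P.PosSemidef) (hQ : Q.PosSemidef) :
    0 ≤ ((P * Q).trace).re := by
  set Rt := (hP.1.eigenvectorUnitary : Matrix n n ℂ) *
    diagonal (fun i => ((√(hP.1.eigenvalues i) : ℝ) : ℂ)) *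
      (hP.1.eigenvectorUnitary : Matrix n n ℂ)ᴴ with hRt
  have hs : Rt * Rt = P := by
    rw [hRt, conj_mul_conj _ (star_mul_self_u hP.1), diagonal_mul_diagonal]
    have hf : (fun i => ((√(hP.1.eigenvalues i) : ℝ) : ℂ) * ((√(hP.1.eigenvalues i) : ℝ) : ℂ))
        = fun i => ((hP.1.eigenvalues i : ℝ) : ℂ) := by
      funext i
      rw [← Complex.ofReal_mul, Real.mul_self_sqrt (hP.eigenvalues_nonneg i)]
    rw [hf]
    exact (spectral' hP.1).symm
  have hH : Rt.IsHermitian := isHermitian_conj_diag _ _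
  have h1 : P * Q = Rt * (Rt * Q) := by rw [← mul_assoc, hs]
  rw [h1, trace_mul_comm, mul_assoc]
  refine trace_re_nonneg ?_
  have := hQ.mul_mul_conjTranspose_same Rtᴴ
  rw [mul_assoc] at this
  rwa [show Rtᴴ = Rt from hH, show Rtᴴ = Rt from hH] at this

lemma re_trace_mul_mono {P A B : Matrix n n ℂ} (hP : P.PosSemidef) (h : (B - A).PosSemidef) :
    ((P * A).trace).re ≤ ((P * B).trace).re := by
  have h0 := trace_mul_psd_nonneg hP h
  rw [mul_sub, trace_sub, Complex.sub_re] at h0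
  linarith

lemma posDef_conj {S C : Matrix n n ℂ} (hS : S.PosDef) (hC : IsUnit C) :
    (Cᴴ * S * C).PosDef := by
  refine PosDef.of_dotProduct_mulVec_pos (isHermitian_conjTranspose_mul_mul C hS.1) fun x hx => ?_
  have hy : C *ᵥ x ≠ 0 := by
    intro h
    exact hx ((mulVec_injective_iff_isUnit.mpr hC) (by simpa using h))
  have h1 : star x ⬝ᵥ ((Cᴴ * S * C) *ᵥ x) = star (C *ᵥ x) ⬝ᵥ (S *ᵥ (C *ᵥ x)) := by
    rw [← mulVec_mulVec, ← mulVec_mulVec, dotProduct_mulVec, star_mulVec]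
  rw [h1]
  exact hS.dotProduct_mulVec_pos hy

lemma spectrum_eq_range {A : Matrix n n ℂ} (hA : A.IsHermitian) :
    spectrum ℂ A = Set.range (fun i => (hA.eigenvalues i : ℂ)) := by
  have hU1 : (hA.eigenvectorUnitary : Matrix n n ℂ)ᴴ * (hA.eigenvectorUnitary : Matrix n n ℂ) = 1 :=
    star_mul_self_u hA
  have hU2 : (hA.eigenvectorUnitary : Matrix n n ℂ) * (hA.eigenvectorUnitary : Matrix n n ℂ)ᴴ = 1 :=
    mul_star_self_u hA
  let u : (Matrix n n ℂ)ˣ := ⟨(hA.eigenvectorUnitary : Matrix n n ℂ),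
    (hA.eigenvectorUnitary : Matrix n n ℂ)ᴴ, hU2, hU1⟩
  have h : A = (u : Matrix n n ℂ) * diagonal (RCLike.ofReal ∘ hA.eigenvalues) *
      ((u⁻¹ : (Matrix n n ℂ)ˣ) : Matrix n n ℂ) := by
    rw [← Matrix.star_eq_conjTranspose] at *
    exact hA.spectral_theorem
  conv_lhs => rw [h]
  rw [spectrum.units_conjugate, _root_.spectrum_diagonal]
  rfl

lemma eigenvalue_le_opNorm {A : Matrix n n ℂ} (hA : A.IsHermitian) (i : n) :
    |hA.eigenvalues i| ≤ opNorm A := by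
  set T := Matrix.toEuclideanCLM (𝕜 := ℂ) A with hT
  set v : EuclideanSpace ℂ n := hA.eigenvectorBasis i with hv
  have hnv : ‖v‖ = 1 := hA.eigenvectorBasis.orthonormal.1 i
  have h1 : T v = (hA.eigenvalues i : ℂ) • v := by
    apply WithLp.ofLp_injective 2
    rw [hT, ofLp_toEuclideanCLM, hv, hA.mulVec_eigenvectorBasis i]
    ext j
    simp [Complex.real_smul]
  have h2 : ‖T v‖ ≤ ‖T‖ * ‖v‖ := T.le_opNorm v
  rw [h1, norm_smul, hnv, mul_one] at h2
  rw [opNorm, ← hT]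
  simpa using h2

lemma sum_eigenvalues_eq_one {ρ : Matrix n n ℂ} (hρ : IsState ρ) (hH : ρ.IsHermitian) :
    ∑ i, hH.eigenvalues i = 1 := by
  have h1 : ρ.trace = ∑ i, (hH.eigenvalues i : ℂ) := by
    conv_lhs => rw [spectral' hH]
    rw [trace_conj _ (star_mul_self_u hH), trace_diagonal]
  rw [hρ.2] at h1
  exact_mod_cast h1.symm

lemma relEnt_nonneg {ρ σ : Matrix n n ℂ} (hρ : IsState ρ) (hσ : IsState σ)
    (hρpd : ρ.PosDef) (hσpd : σ.PosDef) : 0 ≤ relEnt ρ σ := by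
  have hρH : ρ.IsHermitian := hρpd.1
  have hσH : σ.IsHermitian := hσpd.1
  set U := (hρH.eigenvectorUnitary : Matrix n n ℂ) with hUdef
  set V := (hσH.eigenvectorUnitary : Matrix n n ℂ) with hVdef
  set p := hρH.eigenvalues with hpdef
  set q := hσH.eigenvalues with hqdef
  have hp : ∀ i, 0 < p i := hρpd.eigenvalues_pos
  have hq : ∀ i, 0 < q i := hσpd.eigenvalues_pos
  have hU1 : Uᴴ * U = 1 := star_mul_self_u hρH
  have hU2 : U * Uᴴ = 1 := mul_star_self_u hρH
  have hV1 : Vᴴ * V = 1 := star_mul_self_u hσH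
  have hV2 : V * Vᴴ = 1 := mul_star_self_u hσH
  have hsump : ∑ i, p i = 1 := sum_eigenvalues_eq_one hρ hρH
  have hsumq : ∑ j, q j = 1 := sum_eigenvalues_eq_one hσ hσH
  set P := diagonal (fun i => (p i : ℂ)) with hPdef
  set L := diagonal (fun j => ((Real.log (q j) : ℝ) : ℂ)) with hLdef
  set W := Uᴴ * V with hWdef
  set w : n → n → ℝ := fun i j => Complex.normSq (W i j) with hwdef
  have hwnn : ∀ i j, 0 ≤ w i j := fun i j => Complex.normSq_nonneg _
  have hWW : W * Wᴴ = 1 := by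
    rw [hWdef, conjTranspose_mul, conjTranspose_conjTranspose, mul_assoc,
      ← mul_assoc V Vᴴ U, hV2, one_mul, hU1]
  have hWW' : Wᴴ * W = 1 := by
    rw [hWdef, conjTranspose_mul, conjTranspose_conjTranspose, mul_assoc,
      ← mul_assoc U Uᴴ V, hU2, one_mul, hV1]
  have hws : ∀ i j, W i j * star (W i j) = ((w i j : ℝ) : ℂ) := by
    intro i j
    simp only [hwdef, RCLike.star_def, Complex.mul_conj]
  have hrow : ∀ i, ∑ j, w i j = 1 := by
    intro i
    have h1 : (W * Wᴴ) i i = 1 := by rw [hWW, one_apply_eq]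
    rw [mul_apply] at h1
    simp only [conjTranspose_apply, hws] at h1
    exact_mod_cast h1
  have hcol : ∀ j, ∑ i, w i j = 1 := by
    intro j
    have h1 : (Wᴴ * W) j j = 1 := by rw [hWW', one_apply_eq]
    rw [mul_apply] at h1
    simp only [conjTranspose_apply] at h1
    have h2 : ∀ i, star (W i j) * W i j = ((w i j : ℝ) : ℂ) := fun i => by
      rw [mul_comm]; exact hws i j
    simp only [h2] at h1
    exact_mod_cast h1
  -- first trace
  have hlogρ : (ρ * mlog ρ).trace.re = ∑ i, p i * Real.log (p i) := by
    have h1 : U * (P * diagonal (fun i => ((Real.log (p i) : ℝ) : ℂ))) * Uᴴ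
        = ρ * mlog ρ := by
      rw [← conj_mul_conj U hU1, hPdef, ← spectral' hρH, mlog, matFun_apply hρH]
    rw [← h1, trace_conj _ hU1, hPdef, diagonal_mul_diagonal, trace_diagonal, Complex.re_sum]
    apply Finset.sum_congr rfl
    intro i _
    rw [← Complex.ofReal_mul]
    exact Complex.ofReal_re _
  -- second trace
  have hlogσ : (ρ * mlog σ).trace.re = ∑ i, ∑ j, p i * (w i j * Real.log (q j)) := by
    have h1 : U * (P * (W * L * Wᴴ)) * Uᴴ = ρ * mlog σ := by
      have expand : U * (P * (W * L * Wᴴ)) * Uᴴ = (U * P * Uᴴ) * (V * L * Vᴴ) := by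
        rw [hWdef, conjTranspose_mul, conjTranspose_conjTranspose]
        simp only [mul_assoc]
        rw [hU2, mul_one]
      rw [expand, hPdef, ← spectral' hρH, mlog, matFun_apply hσH, hLdef]
    have h2 : ∀ i, (P * (W * L * Wᴴ)) i i
        = ((∑ j, p i * (w i j * Real.log (q j)) : ℝ) : ℂ) := by
      intro i
      rw [hPdef, diagonal_mul, mul_apply]
      rw [Finset.mul_sum, Complex.ofReal_sum]
      apply Finset.sum_congr rfl
      intro j _
      rw [hLdef, mul_diagonal, conjTranspose_apply]
      push_cast
      calc (p i : ℂ) * (W i j * (Real.log (q j) : ℂ) * star (W i j))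
          = (p i : ℂ) * ((W i j * star (W i j)) * (Real.log (q j) : ℂ)) := by ring
        _ = (p i : ℂ) * ((w i j : ℂ) * (Real.log (q j) : ℂ)) := by rw [hws]
    rw [← h1, trace_conj _ hU1, trace, Complex.re_sum]
    apply Finset.sum_congr rfl
    intro i _
    rw [diag_apply, h2, Complex.ofReal_re]
  -- assemble
  set r : n → ℝ := fun i => ∑ j, w i j * q j with hrdef
  have hrpos : ∀ i, 0 < r i := by
    intro i
    obtain ⟨j0, hj0⟩ : ∃ j, w i j ≠ 0 := by
      by_contra hcon
      push_neg at hcon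
      have := hrow i
      simp [hcon] at this
    have h1 : w i j0 * q j0 ≤ r i := by
      refine Finset.single_le_sum (f := fun j => w i j * q j) ?_ (Finset.mem_univ j0)
      intro j _
      exact mul_nonneg (hwnn i j) (hq j).le
    have h2 : 0 < w i j0 * q j0 :=
      mul_pos (lt_of_le_of_ne (hwnn i j0) (Ne.symm hj0)) (hq j0)
    linarith
  have hjensen : ∀ i, ∑ j, w i j * Real.log (q j) ≤ Real.log (r i) := by
    intro i
    have := (strictConcaveOn_log_Ioi.concaveOn).le_map_sum
      (t := Finset.univ) (w := w i) (p := q)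
      (fun j _ => hwnn i j) (hrow i) (fun j _ => hq j)
    simpa [smul_eq_mul, hrdef] using this
  have hsumr : ∑ i, r i = 1 := by
    rw [hrdef]
    rw [Finset.sum_comm]
    calc ∑ j, ∑ i, w i j * q j = ∑ j, (∑ i, w i j) * q j := by
          apply Finset.sum_congr rfl
          intro j _
          rw [Finset.sum_mul]
      _ = ∑ j, q j := by
          apply Finset.sum_congr rfl
          intro j _
          rw [hcol j, one_mul]
      _ = 1 := hsumq
  have hkey : ∑ i, ∑ j, p i * (w i j * Real.log (q j)) ≤ ∑ i, p i * Real.log (p i) := by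
    have step1 : ∀ i, ∑ j, p i * (w i j * Real.log (q j)) ≤ p i * Real.log (r i) := by
      intro i
      rw [← Finset.mul_sum]
      exact mul_le_mul_of_nonneg_left (hjensen i) (hp i).le
    have step2 : ∀ i, p i * Real.log (r i) ≤ p i * Real.log (p i) + (r i - p i) := by
      intro i
      have hlog : Real.log (r i / p i) ≤ r i / p i - 1 :=
        Real.log_le_sub_one_of_pos (div_pos (hrpos i) (hp i))
      rw [Real.log_div (hrpos i).ne' (hp i).ne'] at hlog
      have := mul_le_mul_of_nonneg_left hlog (hp i).le
      have hne : p i ≠ 0 := (hp i).ne'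
      field_simp at this
      rw [mul_div_cancel_left₀ _ hne] at this
      nlinarith [hp i]
    calc ∑ i, ∑ j, p i * (w i j * Real.log (q j))
        ≤ ∑ i, p i * Real.log (r i) := Finset.sum_le_sum fun i _ => step1 i
      _ ≤ ∑ i, (p i * Real.log (p i) + (r i - p i)) :=
          Finset.sum_le_sum fun i _ => step2 i
      _ = ∑ i, p i * Real.log (p i) + (∑ i, r i - ∑ i, p i) := by
          rw [Finset.sum_add_distrib, Finset.sum_sub_distrib]
      _ = ∑ i, p i * Real.log (p i) := by rw [hsumr, hsump]; ring
  have hfinal : relEnt ρ σ = (ρ * mlog ρ).trace.re - (ρ * mlog σ).trace.re := by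
    rw [relEnt, mul_sub, trace_sub, Complex.sub_re]
  rw [hfinal, hlogρ, hlogσ]
  linarith

lemma bsEnt_le_c {ρ σ : Matrix n n ℂ} (hρ : IsState ρ) (hσ : IsState σ)
    (hρpd : ρ.PosDef) (hσpd : σ.PosDef)
    (m : ℝ) (hm : IsLeast {x : ℝ | (x : ℂ) ∈ spectrum ℂ σ} m) :
    bsEnt ρ σ ≤ (1 / m) * opNorm (ρ - σ) := by
  have hρH : ρ.IsHermitian := hρpd.1
  have hσH : σ.IsHermitian := hσpd.1
  set U := (hρH.eigenvectorUnitary : Matrix n n ℂ) with hUdef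
  set V := (hσH.eigenvectorUnitary : Matrix n n ℂ) with hVdef
  set p := hρH.eigenvalues with hpdef
  set q := hσH.eigenvalues with hqdef
  have hp : ∀ i, 0 < p i := hρpd.eigenvalues_pos
  have hq : ∀ i, 0 < q i := hσpd.eigenvalues_pos
  have hU1 : Uᴴ * U = 1 := star_mul_self_u hρH
  have hU2 : U * Uᴴ = 1 := mul_star_self_u hρH
  have hV1 : Vᴴ * V = 1 := star_mul_self_u hσH
  have hV2 : V * Vᴴ = 1 := mul_star_self_u hσH
  -- facts about m
  have hmset : {x : ℝ | (x : ℂ) ∈ spectrum ℂ σ} = Set.range q := by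
    ext x
    simp only [Set.mem_setOf_eq, spectrum_eq_range hσH, Set.mem_range]
    constructor
    · rintro ⟨j, hj⟩; exact ⟨j, by exact_mod_cast hj⟩
    · rintro ⟨j, hj⟩; exact ⟨j, by exact_mod_cast hj⟩
  rw [hmset] at hm
  obtain ⟨⟨j0, hj0⟩, hub⟩ := hm
  have hm0 : 0 < m := hj0 ▸ hq j0
  have hmq : ∀ j, m ≤ q j := fun j => hub ⟨j, rfl⟩
  -- epsilon and c
  set ε := opNorm (ρ - σ) with hεdef
  have hε0 : 0 ≤ ε := norm_nonneg _
  set c := ε / m with hcdef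
  have hc0 : 0 ≤ c := div_nonneg hε0 hm0.le
  have h1c : (0:ℝ) < 1 + c := by linarith
  -- Δ
  have hΔH : (ρ - σ).IsHermitian := hρH.sub hσH
  set Y := (hΔH.eigenvectorUnitary : Matrix n n ℂ) with hYdef
  set δ := hΔH.eigenvalues with hδdef
  have hY1 : Yᴴ * Y = 1 := star_mul_self_u hΔH
  have hY2 : Y * Yᴴ = 1 := mul_star_self_u hΔH
  have hδle : ∀ i, δ i ≤ ε := fun i => (abs_le.mp (eigenvalue_le_opNorm hΔH i)).2
  have hpsd1 : (((ε:ℝ):ℂ) • (1 : Matrix n n ℂ) - (ρ - σ)).PosSemidef := by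
    have he : ((ε:ℝ):ℂ) • (1 : Matrix n n ℂ) - (ρ - σ)
        = Y * diagonal (fun i => ((ε - δ i : ℝ) : ℂ)) * Yᴴ := by
      conv_lhs => rw [smul_one_conj Y hY2 ((ε:ℝ):ℂ), spectral' hΔH]
      rw [conj_sub, diagonal_sub]
      congr 2
      funext i
      push_cast
      rfl
    rw [he]
    exact psd_conj_diag Y _ (fun i => by have := hδle i; linarith)
  have hpsd2 : (((c:ℝ):ℂ) • σ - ((ε:ℝ):ℂ) • (1 : Matrix n n ℂ)).PosSemidef := by
    have he : ((c:ℝ):ℂ) • σ - ((ε:ℝ):ℂ) • (1 : Matrix n n ℂ)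
        = V * diagonal (fun j => ((c * q j - ε : ℝ) : ℂ)) * Vᴴ := by
      conv_lhs => rw [smul_one_conj V hV2 ((ε:ℝ):ℂ), spectral' hσH]
      rw [← Matrix.smul_mul, ← Matrix.mul_smul, ← diagonal_smul, conj_sub, diagonal_sub]
      congr 2
      funext j
      simp only [Pi.smul_apply, smul_eq_mul]
      push_cast
      ring
    rw [he]
    refine psd_conj_diag V _ (fun j => ?_)
    have h1 : c * m ≤ c * q j := mul_le_mul_of_nonneg_left (hmq j) hc0
    have h2 : c * m = ε := by rw [hcdef]; field_simp
    linarith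
  have hρcσ : (((1 + c : ℝ):ℂ) • σ - ρ).PosSemidef := by
    have he : ((1 + c : ℝ):ℂ) • σ - ρ
        = (((ε:ℝ):ℂ) • (1 : Matrix n n ℂ) - (ρ - σ)) + (((c:ℝ):ℂ) • σ - ((ε:ℝ):ℂ) • 1) := by
      push_cast
      module
    rw [he]
    exact hpsd1.add hpsd2
  -- R and S
  set R := mpow ρ (1/2) with hRdef
  set S := mpow σ (-1) with hSdef
  have hRspec : R = U * diagonal (fun i => ((p i ^ ((1:ℝ)/2) : ℝ) : ℂ)) * Uᴴ := by
    rw [hRdef, mpow, matFun_apply hρH]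
  have hSspec : S = V * diagonal (fun j => ((q j ^ (-1:ℝ) : ℝ) : ℂ)) * Vᴴ := by
    rw [hSdef, mpow, matFun_apply hσH]
  have hRH : R.IsHermitian := by rw [hRspec]; exact isHermitian_conj_diag U _
  have hSH : S.IsHermitian := by rw [hSspec]; exact isHermitian_conj_diag V _
  have hRR : R * R = ρ := by
    rw [hRspec, conj_mul_conj U hU1, diagonal_mul_diagonal]
    have hfun : (fun i => ((p i ^ ((1:ℝ)/2) : ℝ) : ℂ) * ((p i ^ ((1:ℝ)/2) : ℝ) : ℂ))
        = (fun i => ((p i : ℝ) : ℂ)) := by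
      funext i
      norm_cast
      rw [← Real.rpow_add (hp i)]
      norm_num
    rw [hfun]
    exact (spectral' hρH).symm
  have hSσ : S * σ = 1 := by
    conv_lhs => rw [hSspec, spectral' hσH]
    rw [conj_mul_conj V hV1, diagonal_mul_diagonal]
    have hfun : (fun j => ((q j ^ (-1:ℝ) : ℝ) : ℂ) * ((q j : ℝ) : ℂ))
        = fun _ => (1:ℂ) := by
      funext j
      rw [Real.rpow_neg_one]
      norm_cast
      exact inv_mul_cancel₀ (hq j).ne'
    rw [hfun, diagonal_one, mul_one, hV2]
  have hRpd : R.PosDef := by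
    have hdiag : (diagonal (fun i => ((p i ^ ((1:ℝ)/2) : ℝ) : ℂ))).PosDef := by
      refine posDef_diagonal_iff.mpr fun i => ?_
      exact Complex.zero_lt_real.mpr (Real.rpow_pos_of_pos (hp i) _)
    have hUu : IsUnit Uᴴ := ⟨⟨Uᴴ, U, hU1, hU2⟩, rfl⟩
    have := posDef_conj hdiag hUu
    rwa [conjTranspose_conjTranspose, ← hRspec] at this
  have hSpd : S.PosDef := by
    have hdiag : (diagonal (fun j => ((q j ^ (-1:ℝ) : ℝ) : ℂ))).PosDef := by
      refine posDef_diagonal_iff.mpr fun j => ?_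
      exact Complex.zero_lt_real.mpr (Real.rpow_pos_of_pos (hq j) _)
    have hVu : IsUnit Vᴴ := ⟨⟨Vᴴ, V, hV1, hV2⟩, rfl⟩
    have := posDef_conj hdiag hVu
    rwa [conjTranspose_conjTranspose, ← hSspec] at this
  set M := R * S * R with hMdef
  have hMpd : M.PosDef := by
    have := posDef_conj hSpd hRpd.isUnit
    rwa [show Rᴴ = R from hRH] at this
  have hMH : M.IsHermitian := hMpd.1
  set Um := (hMH.eigenvectorUnitary : Matrix n n ℂ) with hUmdef
  set μ := hMH.eigenvalues with hμdef
  have hμpos : ∀ i, 0 < μ i := hMpd.eigenvalues_pos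
  have hUm1 : Umᴴ * Um = 1 := star_mul_self_u hMH
  have hUm2 : Um * Umᴴ = 1 := mul_star_self_u hMH
  -- M² ≤ (1+c) M
  have hM2 : (((1 + c : ℝ):ℂ) • M - M * M).PosSemidef := by
    have key := hρcσ.mul_mul_conjTranspose_same (R * S)
    have hRS : (R * S)ᴴ = S * R := by
      rw [conjTranspose_mul, show Rᴴ = R from hRH, show Sᴴ = S from hSH]
    rw [hRS] at key
    have e1 : (R * S) * (((1 + c : ℝ):ℂ) • σ) * (S * R) = ((1 + c : ℝ):ℂ) • M := by
      rw [Matrix.mul_smul, Matrix.smul_mul]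
      congr 1
      calc R * S * σ * (S * R) = R * (S * σ) * (S * R) := by simp only [mul_assoc]
        _ = R * (S * R) := by rw [hSσ, mul_one]
        _ = M := by rw [hMdef, mul_assoc]
    have e2 : (R * S) * ρ * (S * R) = M * M := by
      rw [← hRR, hMdef]
      simp only [mul_assoc]
    rw [Matrix.mul_sub, Matrix.sub_mul, e1, e2] at key
    exact key
  -- eigenvalues of M are ≤ 1 + c
  have hμle : ∀ i, μ i ≤ 1 + c := by
    intro i
    set v : n → ℂ := ⇑(hMH.eigenvectorBasis i) with hvdef
    have hv0 : v ≠ 0 := fun h => hMH.eigenvectorBasis.orthonormal.ne_zero i (by rw [hvdef] at h; simpa using h)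
    have hMv : M *ᵥ v = ((μ i : ℝ) : ℂ) • v := by
      have h := hMH.mulVec_eigenvectorBasis i
      rw [hvdef, h]
      funext j
      simp [Pi.smul_apply, Complex.real_smul]
      exact Or.inl rfl
    have hM2v : (M * M) *ᵥ v = (((μ i : ℝ) : ℂ) * ((μ i : ℝ) : ℂ)) • v := by
      rw [← mulVec_mulVec, hMv, mulVec_smul, hMv, smul_smul]
    have key2 := hM2.dotProduct_mulVec_nonneg v
    rw [sub_mulVec, smul_mulVec, hMv, hM2v] at key2
    simp only [dotProduct_sub, dotProduct_smul, smul_smul] at key2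
    rw [← sub_smul] at key2
    set T := star v ⬝ᵥ v with hTdef
    have hT : 0 < T := dotProduct_star_self_pos_iff.mpr hv0
    have hTre : 0 < T.re := (Complex.lt_def.mp hT).1
    have hKre : (0:ℝ) ≤ ((1 + c) * μ i - μ i * μ i) * T.re := by
      have h1 : ((((1 + c : ℝ):ℂ) * ((μ i : ℝ):ℂ) - ((μ i : ℝ):ℂ) * ((μ i : ℝ):ℂ)) • T)
          = (((( (1 + c) * μ i - μ i * μ i : ℝ)):ℂ)) * T := by
        push_cast
        rw [smul_eq_mul]
      rw [h1] at key2
      have := (Complex.le_def.mp key2).1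
      rwa [Complex.re_ofReal_mul, Complex.zero_re] at this
    have hμp := hμpos i
    nlinarith [mul_pos hμp hTre]
  -- scalar tangent bound
  set c1 : ℝ := Real.log (1 + c) - 1 with hc1def
  set c2 : ℝ := (1 + c)⁻¹ with hc2def
  have hc2nn : 0 ≤ c2 := by rw [hc2def]; positivity
  have hμc : ∀ i, Real.log (μ i) ≤ c1 + c2 * μ i := by
    intro i
    have h := Real.log_le_sub_one_of_pos (div_pos (hμpos i) h1c)
    rw [Real.log_div (hμpos i).ne' h1c.ne'] at h
    have hdiv : μ i / (1 + c) = c2 * μ i := by rw [hc2def, div_eq_inv_mul]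
    rw [hdiv] at h
    rw [hc1def]
    linarith
  -- tangent matrix inequality
  have htangent : (((c1:ℝ):ℂ) • (1 : Matrix n n ℂ) + ((c2:ℝ):ℂ) • M - mlog M).PosSemidef := by
    have e : ((c1:ℝ):ℂ) • (1 : Matrix n n ℂ) + ((c2:ℝ):ℂ) • M - mlog M
        = Um * diagonal (fun i => ((c1 + c2 * μ i - Real.log (μ i) : ℝ) : ℂ)) * Umᴴ := by
      rw [mlog, matFun_apply hMH, ← hUmdef, ← hμdef]
      conv_lhs => rw [smul_one_conj Um hUm2 ((c1:ℝ):ℂ), spectral' hMH,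
        ← Matrix.smul_mul, ← Matrix.mul_smul, ← diagonal_smul]
      rw [conj_add, conj_sub, diagonal_add, diagonal_sub]
      congr 2
      funext i
      simp only [Pi.smul_apply, smul_eq_mul]
      push_cast
      ring
    rw [e]
    exact psd_conj_diag Um _ (fun i => by have := hμc i; linarith)
  -- M ≤ (1+c) 1
  have hMle : ((((1 + c : ℝ)):ℂ) • (1 : Matrix n n ℂ) - M).PosSemidef := by
    have e : (((1 + c : ℝ)):ℂ) • (1 : Matrix n n ℂ) - M
        = Um * diagonal (fun i => ((1 + c - μ i : ℝ) : ℂ)) * Umᴴ := by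
      conv_lhs => rw [smul_one_conj Um hUm2 (((1 + c : ℝ)):ℂ), spectral' hMH]
      rw [conj_sub, diagonal_sub]
      congr 2
      funext i
      push_cast
      rfl
    rw [e]
    exact psd_conj_diag Um _ (fun i => by have := hμle i; linarith)
  -- trace bounds
  have htrM : ((ρ * M).trace).re ≤ 1 + c := by
    have h1 := re_trace_mul_mono hρ.1 hMle
    have h2 : (ρ * ((((1 + c : ℝ)):ℂ) • (1 : Matrix n n ℂ))).trace = (((1 + c : ℝ)):ℂ) := by
      rw [Matrix.mul_smul, mul_one, trace_smul, hρ.2, smul_eq_mul, mul_one]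
    rw [h2] at h1
    simpa using h1
  have hbs : bsEnt ρ σ = ((ρ * mlog M).trace).re := rfl
  have hstep1 : ((ρ * mlog M).trace).re
      ≤ ((ρ * (((c1:ℝ):ℂ) • (1 : Matrix n n ℂ) + ((c2:ℝ):ℂ) • M)).trace).re :=
    re_trace_mul_mono hρ.1 htangent
  have hstep2 : ((ρ * (((c1:ℝ):ℂ) • (1 : Matrix n n ℂ) + ((c2:ℝ):ℂ) • M)).trace).re
      = c1 + c2 * ((ρ * M).trace).re := by
    rw [Matrix.mul_add, trace_add, Complex.add_re]
    congr 1
    · rw [Matrix.mul_smul, mul_one, trace_smul, hρ.2, smul_eq_mul, mul_one, Complex.ofReal_re]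
    · rw [Matrix.mul_smul, trace_smul, smul_eq_mul, Complex.re_ofReal_mul]
  have hlogc : Real.log (1 + c) ≤ c := by
    have := Real.log_le_sub_one_of_pos h1c
    linarith
  have hfin : bsEnt ρ σ ≤ c := by
    rw [hbs]
    have h3 : c1 + c2 * ((ρ * M).trace).re ≤ c1 + c2 * (1 + c) :=
      add_le_add_right (mul_le_mul_of_nonneg_left htrM hc2nn) c1
    have h4 : c2 * (1 + c) = 1 := by rw [hc2def]; field_simp
    have h5 := hstep1.trans (le_of_eq hstep2)
    rw [h4] at h3
    calc ((ρ * mlog M).trace).re ≤ c1 + 1 := h5.trans h3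
      _ = Real.log (1 + c) := by rw [hc1def]; ring
      _ ≤ c := hlogc
  calc bsEnt ρ σ ≤ c := hfin
    _ = (1 / m) * ε := by rw [hcdef]; ring

end AuxLemmas

/-- **The BS-entropy exceeds the relative entropy by at most `(1/m)‖ρ-σ‖∞`**. -/
theorem bsEnt_le_relEnt_add {d : ℕ}
    (ρ σ : Matrix (Fin d) (Fin d) ℂ)
    (hρ : IsState ρ) (hσ : IsState σ) (hρpd : ρ.PosDef) (hσpd : σ.PosDef)
    (m : ℝ) (hm : IsLeast {x : ℝ | (x : ℂ) ∈ spectrum ℂ σ} m) :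
    bsEnt ρ σ ≤ relEnt ρ σ + (1 / m) * opNorm (ρ - σ) := by
  have h1 := relEnt_nonneg hρ hσ hρpd hσpd
  have h2 := bsEnt_le_c hρ hσ hρpd hσpd m hm
  linarith

end QPaper
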